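/- For every positive integer k, the graph K_{k,2k+2}^m := the join of an empty graph on k vertices with the disjoint union of 2k - 2 isolated vertices and two disjoint edges (2K_2), contains every tree on 2k + 3 vertices as a subgraph. -/

import Mathlib

open SimpleGraph Finset

/-- The signless Laplacian matrix `Q(G) = D(G) + A(G)` over `ℝ`. -/
def signlessLaplacian {V : Type*} [Fintype V] [DecidableEq V] (G : SimpleGraph V)
    [DecidableRel G.Adj] : Matrix V V ℝ :=
  SimpleGraph.degMatrix ℝ G + G.adjMatrix ℝ

/-- `q` is the largest eigenvalue of the real matrix `M`. -/
def IsMaxEigenvalue {V : Type*} [Fintype V] [DecidableEq V] (M : Matrix V V ℝ) (q : ℝ) : Prop :=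
  Module.End.HasEigenvalue (Matrix.toLin' M) q ∧
    ∀ μ : ℝ, Module.End.HasEigenvalue (Matrix.toLin' M) μ → μ ≤ q

/-- `S_{n,k}`: the join of `K_k` with an empty graph on `n - k` vertices. -/
def Snk (n k : ℕ) : SimpleGraph (Fin n) where
  Adj u v := u ≠ v ∧ (u.val < k ∨ v.val < k)
  symm := ⟨fun u v ⟨h1, h2⟩ => ⟨h1.symm, h2.symm⟩⟩
  loopless := ⟨fun u ⟨h, _⟩ => h rfl⟩

instance (n k : ℕ) : DecidableRel (Snk n k).Adj := fun u v =>
  inferInstanceAs (Decidable (u ≠ v ∧ (u.val < k ∨ v.val < k)))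

/-- `S_{n,k}^+`: `S_{n,k}` plus one edge inside the independent set (between
vertices `k` and `k+1`). -/
def SnkPlus (n k : ℕ) : SimpleGraph (Fin n) where
  Adj u v := u ≠ v ∧ (u.val < k ∨ v.val < k ∨ (u.val ≤ k + 1 ∧ v.val ≤ k + 1))
  symm := ⟨fun u v ⟨h1, h2⟩ => ⟨h1.symm, by tauto⟩⟩
  loopless := ⟨fun u ⟨h, _⟩ => h rfl⟩

instance (n k : ℕ) : DecidableRel (SnkPlus n k).Adj := fun u v =>
  inferInstanceAs (Decidable (u ≠ v ∧ (u.val < k ∨ v.val < k ∨ (u.val ≤ k + 1 ∧ v.val ≤ k + 1))))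

/-- `T` is contained in `G` as a subgraph: there is an injective graph homomorphism. -/
def ContainsSub {α β : Type*} (T : SimpleGraph α) (G : SimpleGraph β) : Prop :=
  ∃ f : T →g G, Function.Injective f

/-- The join `G ∨ H` of two graphs: all edges between the two vertex sets are added. -/
def graphJoin {α β : Type*} (G : SimpleGraph α) (H : SimpleGraph β) :
    SimpleGraph (α ⊕ β) where
  Adj u v := match u, v with
    | Sum.inl a, Sum.inl b => G.Adj a b
    | Sum.inr a, Sum.inr b => H.Adj a b
    | _, _ => True
  symm := ⟨by rintro (a | a) (b | b) h <;> first | exact h.symm | trivial⟩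
  loopless := ⟨by rintro (a | a) h
                  · exact G.irrefl h
                  · exact H.irrefl h⟩

/-- `(2k-2)K_1 ∪ 2K_2` on `2k+2` vertices: two disjoint edges on the last four vertices. -/
def twoEdgesGraph (k : ℕ) : SimpleGraph (Fin (2 * k + 2)) where
  Adj a b := a ≠ b ∧
    ((a.val = 2 * k - 2 ∧ b.val = 2 * k - 1) ∨ (a.val = 2 * k - 1 ∧ b.val = 2 * k - 2) ∨
     (a.val = 2 * k ∧ b.val = 2 * k + 1) ∨ (a.val = 2 * k + 1 ∧ b.val = 2 * k))
  symm := ⟨fun a b ⟨h1, h2⟩ => ⟨h1.symm, by tauto⟩⟩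
  loopless := ⟨fun a ⟨h, _⟩ => h rfl⟩

section Aux
variable {α : Type*} {T : SimpleGraph α}

lemma walk_closed' {S : Set α} (hS : ∀ u ∈ S, ∀ v, T.Adj u v → v ∈ S) :
    ∀ {u v : α}, T.Walk u v → u ∈ S → v ∈ S := by
  intro u v p
  induction p with
  | nil => exact id
  | cons h' p ih => exact fun hu => ih (hS _ hu _ h')

end Aux

lemma tree_parity {α : Type*} {T : SimpleGraph α} (hT : T.IsTree) :
    ∃ c : α → Bool, ∀ ⦃u v⦄, T.Adj u v → c u ≠ c v := by
  classical
  have hne : Nonempty α := hT.isConnected.nonempty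
  set r := Classical.arbitrary α with hr
  choose P hP hPu using fun v => hT.existsUnique_path v r
  refine ⟨fun v => decide (Even (P v).length), ?_⟩
  intro u v h
  have key : Odd ((P u).length + (P v).length) := by
    by_cases hu : u ∈ (P v).support
    · have hdrop : ((P v).dropUntil u hu).IsPath := (hP v).dropUntil hu
      have htake : ((P v).takeUntil u hu).IsPath := (hP v).takeUntil hu
      have h2 : (P v).takeUntil u hu = (Path.singleton h.symm).1 := by
        have := hT.IsAcyclic.path_unique ⟨(P v).takeUntil u hu, htake⟩ (Path.singleton h.symm)
        exact congrArg Subtype.val this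
      have h3 : ((P v).takeUntil u hu).length = 1 := by
        rw [h2]; simp [Path.singleton]
      have h4 : ((P v).takeUntil u hu).length + ((P v).dropUntil u hu).length
          = (P v).length := by
        rw [← Walk.length_append, Walk.take_spec]
      have h5 : P u = (P v).dropUntil u hu := by
        have ha := hPu u ((P v).dropUntil u hu) hdrop
        have h6 := hPu u (P u) (hP u)
        rw [ha, h6]
      rw [h5, Nat.odd_iff]
      omega
    · have hq : (Walk.cons h (P v)).IsPath := (hP v).cons hu
      have h5 : P u = Walk.cons h (P v) := by
        have ha := hPu u _ hq
        have h6 := hPu u (P u) (hP u)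
        rw [ha, h6]
      rw [h5, Walk.length_cons, Nat.odd_iff]
      omega
  simp only [ne_eq, decide_eq_decide, Nat.even_iff]
  rw [Nat.odd_iff] at key
  omega

theorem stmt_9 (k : ℕ) (hk : 0 < k) {α : Type*} [Fintype α]
    (T : SimpleGraph α) (hT : T.IsTree) (hcard : Fintype.card α = 2 * k + 3) :
    ContainsSub T (graphJoin (⊥ : SimpleGraph (Fin k)) (twoEdgesGraph k)) := by
  classical
  -- host adjacency helpers
  have hostrr : ∀ x y : Fin (2*k+2), (twoEdgesGraph k).Adj x y →
      (graphJoin (⊥ : SimpleGraph (Fin k)) (twoEdgesGraph k)).Adj (Sum.inr x) (Sum.inr y) :=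
    fun x y h => h
  have hostlr : ∀ (x : Fin k) (y : Fin (2*k+2)),
      (graphJoin (⊥ : SimpleGraph (Fin k)) (twoEdgesGraph k)).Adj (Sum.inl x) (Sum.inr y) :=
    fun x y => trivial
  have hostrl : ∀ (x : Fin (2*k+2)) (y : Fin k),
      (graphJoin (⊥ : SimpleGraph (Fin k)) (twoEdgesGraph k)).Adj (Sum.inr x) (Sum.inl y) :=
    fun x y => trivial
  -- coloring and the two classes
  obtain ⟨c0, hc0⟩ := tree_parity hT
  obtain ⟨c, hc, hcle⟩ : ∃ c : α → Bool, (∀ ⦃u v⦄, T.Adj u v → c u ≠ c v) ∧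
      (univ.filter fun v => c v = true).card ≤ k + 1 := by
    have hsplit := Finset.card_filter_add_card_filter_not
      (s := (univ : Finset α)) (p := fun v => c0 v = true)
    rw [Finset.card_univ, hcard] at hsplit
    by_cases hle : (univ.filter fun v => c0 v = true).card ≤ k + 1
    · exact ⟨c0, hc0, hle⟩
    · refine ⟨fun v => !c0 v, ?_, ?_⟩
      · intro u v h e
        apply hc0 h
        cases hcu : (c0 u) <;> cases hcv : (c0 v) <;> simp_all
      · have heq : (univ.filter fun v => (!c0 v) = true)
            = univ.filter fun v => ¬(c0 v = true) := by
          apply Finset.filter_congr; intro x _; simp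
        rw [heq]; omega
  set A := univ.filter (fun v => c v = true) with hA
  set B := univ.filter (fun v => c v = false) with hB
  have hmemA : ∀ {v}, v ∈ A ↔ c v = true := by intro v; simp [hA]
  have hmemB : ∀ {v}, v ∈ B ↔ c v = false := by intro v; simp [hB]
  have hnotA : ∀ {v}, v ∉ A → v ∈ B := by
    intro v hv; rw [hmemA] at hv; rw [hmemB]; simpa using hv
  have hdisj : ∀ {v}, v ∈ B → v ∉ A := by
    intro v hv hv2; rw [hmemA] at hv2; rw [hmemB] at hv; simp_all
  have hdisj' : ∀ {v}, v ∈ A → v ∉ B := fun hv hv2 => hdisj hv2 hv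
  have hcardAB : A.card + B.card = 2 * k + 3 := by
    have hsplit := Finset.card_filter_add_card_filter_not
      (s := (univ : Finset α)) (p := fun v => c v = true)
    rw [Finset.card_univ, hcard] at hsplit
    have heq : (univ.filter fun v => ¬(c v = true)) = B := by
      apply Finset.filter_congr; intro x _; simp
    rw [← heq]; exact hsplit
  have hcrossAB : ∀ {u v}, T.Adj u v → u ∈ A → v ∈ B := by
    intro u v h hu
    rw [hmemA] at hu; rw [hmemB]
    have h2 := hc h; rw [hu] at h2
    simpa using h2.symm
  have hcrossBA : ∀ {u v}, T.Adj u v → u ∈ B → v ∈ A := by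
    intro u v h hu
    rw [hmemB] at hu; rw [hmemA]
    have h2 := hc h; rw [hu] at h2
    simpa using h2.symm
  -- degree facts
  have hdegpos : ∀ v : α, 0 < T.degree v := by
    intro v
    rw [SimpleGraph.degree_pos_iff_exists_adj]
    have h1 : 1 < Fintype.card α := by omega
    obtain ⟨w, hw⟩ := Fintype.exists_ne_of_one_lt_card h1 v
    obtain ⟨p⟩ := hT.isConnected v w
    cases p with
    | nil => exact absurd rfl hw
    | cons h q => exact ⟨_, h⟩
  have hsumdeg : ∑ v, T.degree v = 2 * (2 * k + 2) := by
    rw [SimpleGraph.sum_degrees_eq_twice_card_edges]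
    have h2 := hT.card_edgeFinset
    rw [hcard] at h2
    omega
  have huniq : ∀ v : α, T.degree v = 1 → ∃ b, ∀ w, T.Adj v w ↔ w = b := by
    intro v h1
    obtain ⟨b, hb⟩ := Finset.card_eq_one.mp h1
    exact ⟨b, fun w => by rw [← SimpleGraph.mem_neighborFinset, hb, Finset.mem_singleton]⟩
  by_cases hAk : A.card ≤ k
  · -- CASE 1 : the small class fits into the left side
    have hAne : 0 < A.card := by
      have hne : Nonempty α := hT.isConnected.nonempty
      set v := Classical.arbitrary α
      obtain ⟨w, hw⟩ := (SimpleGraph.degree_pos_iff_exists_adj T v).mp (hdegpos v)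
      rcases (Bool.eq_false_or_eq_true (c v)) with h | h
      · exact Finset.card_pos.mpr ⟨v, hmemA.mpr h⟩
      · have : w ∈ A := hcrossBA hw (hmemB.mpr h)
        exact Finset.card_pos.mpr ⟨w, this⟩
    have hBle : B.card ≤ 2 * k + 2 := by omega
    obtain ⟨eA⟩ : Nonempty ({x // x ∈ A} ↪ Fin k) :=
      Function.Embedding.nonempty_of_card_le
        (by rw [Fintype.card_coe, Fintype.card_fin]; exact hAk)
    obtain ⟨eB⟩ : Nonempty ({x // x ∈ B} ↪ Fin (2 * k + 2)) :=
      Function.Embedding.nonempty_of_card_le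
        (by rw [Fintype.card_coe, Fintype.card_fin]; exact hBle)
    set gA : α → ℕ := fun v => if h : v ∈ A then (eA ⟨v, h⟩).val else 0 with hgA
    set gB : α → ℕ := fun v => if h : v ∈ B then (eB ⟨v, h⟩).val else 0 with hgB
    have hgAlt : ∀ v, gA v < k := by
      intro v; rw [hgA]; dsimp only; split
      · exact Fin.is_lt _
      · exact hk
    have hgBlt : ∀ v, gB v < 2 * k + 2 := by
      intro v; rw [hgB]; dsimp only; split
      · exact Fin.is_lt _
      · omega
    have hgAinj : ∀ u v, u ∈ A → v ∈ A → gA u = gA v → u = v := by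
      intro u v hu hv h
      rw [hgA] at h; dsimp only at h; rw [dif_pos hu, dif_pos hv] at h
      have h2 : eA ⟨u, hu⟩ = eA ⟨v, hv⟩ := Fin.val_injective h
      exact congrArg Subtype.val (eA.injective h2)
    have hgBinj : ∀ u v, u ∈ B → v ∈ B → gB u = gB v → u = v := by
      intro u v hu hv h
      rw [hgB] at h; dsimp only at h; rw [dif_pos hu, dif_pos hv] at h
      have h2 : eB ⟨u, hu⟩ = eB ⟨v, hv⟩ := Fin.val_injective h
      exact congrArg Subtype.val (eB.injective h2)
    set f : α → Fin k ⊕ Fin (2 * k + 2) := fun v =>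
      if v ∈ A then Sum.inl ⟨gA v, hgAlt v⟩ else Sum.inr ⟨gB v, hgBlt v⟩ with hf
    have hfmap : ∀ ⦃u v⦄, T.Adj u v →
        (graphJoin (⊥ : SimpleGraph (Fin k)) (twoEdgesGraph k)).Adj (f u) (f v) := by
      intro u v h
      by_cases hu : u ∈ A
      · have hv : v ∉ A := hdisj (hcrossAB h hu)
        rw [hf]; dsimp only; rw [if_pos hu, if_neg hv]
        exact hostlr _ _
      · have hv : v ∈ A := hcrossBA h (hnotA hu)
        rw [hf]; dsimp only; rw [if_neg hu, if_pos hv]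
        exact hostrl _ _
    have hfinj : Function.Injective f := by
      intro u v h
      rw [hf] at h; dsimp only at h
      by_cases hu : u ∈ A <;> by_cases hv : v ∈ A
      · rw [if_pos hu, if_pos hv] at h
        simp only [Sum.inl.injEq, Fin.mk.injEq] at h
        exact hgAinj u v hu hv h
      · rw [if_pos hu, if_neg hv] at h; simp at h
      · rw [if_neg hu, if_pos hv] at h; simp at h
      · rw [if_neg hu, if_neg hv] at h
        simp only [Sum.inr.injEq, Fin.mk.injEq] at h
        exact hgBinj u v (hnotA hu) (hnotA hv) h
    exact ⟨⟨f, fun {u v} h => hfmap h⟩, hfinj⟩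
  · -- |A| = k+1
    have hAcard : A.card = k + 1 := by omega
    have hBcard : B.card = k + 2 := by omega
    by_cases hleafA : ∃ a ∈ A, T.degree a = 1
    · -- CASE L : a leaf inside A
      obtain ⟨a, haA, ha1⟩ := hleafA
      obtain ⟨b, hnb⟩ := huniq a ha1
      have hab : T.Adj a b := (hnb b).mpr rfl
      have hbB : b ∈ B := hcrossAB hab haA
      have hba : b ≠ a := fun e => T.loopless.irrefl a (by rw [e] at hab; exact hab)
      obtain ⟨eA⟩ : Nonempty ({x // x ∈ A.erase a} ↪ Fin k) :=
        Function.Embedding.nonempty_of_card_le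
          (by rw [Fintype.card_coe, Fintype.card_fin, Finset.card_erase_of_mem haA]; omega)
      obtain ⟨eB⟩ : Nonempty ({x // x ∈ B.erase b} ↪ Fin (2 * k)) :=
        Function.Embedding.nonempty_of_card_le
          (by rw [Fintype.card_coe, Fintype.card_fin, Finset.card_erase_of_mem hbB]; omega)
      set gA : α → ℕ := fun v => if h : v ∈ A.erase a then (eA ⟨v, h⟩).val else 0 with hgA
      set gB : α → ℕ := fun v => if h : v ∈ B.erase b then (eB ⟨v, h⟩).val else 0 with hgB
      have hgAlt : ∀ v, gA v < k := by
        intro v; rw [hgA]; dsimp only; split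
        · exact Fin.is_lt _
        · exact hk
      have hgBlt : ∀ v, gB v < 2 * k := by
        intro v; rw [hgB]; dsimp only; split
        · exact Fin.is_lt _
        · omega
      have hgAinj : ∀ u v, u ∈ A.erase a → v ∈ A.erase a → gA u = gA v → u = v := by
        intro u v hu hv h
        rw [hgA] at h; dsimp only at h; rw [dif_pos hu, dif_pos hv] at h
        exact congrArg Subtype.val (eA.injective (Fin.val_injective h))
      have hgBinj : ∀ u v, u ∈ B.erase b → v ∈ B.erase b → gB u = gB v → u = v := by
        intro u v hu hv h
        rw [hgB] at h; dsimp only at h; rw [dif_pos hu, dif_pos hv] at h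
        exact congrArg Subtype.val (eB.injective (Fin.val_injective h))
      set f : α → Fin k ⊕ Fin (2 * k + 2) := fun v =>
        if v = a then Sum.inr ⟨2 * k, by omega⟩
        else if v = b then Sum.inr ⟨2 * k + 1, by omega⟩
        else if v ∈ A then Sum.inl ⟨gA v, hgAlt v⟩
        else Sum.inr ⟨gB v, by have := hgBlt v; omega⟩ with hf
      have he1 : (twoEdgesGraph k).Adj ⟨2 * k, by omega⟩ ⟨2 * k + 1, by omega⟩ := by
        show _ ≠ _ ∧ _
        refine ⟨?_, Or.inr (Or.inr (Or.inl ⟨rfl, rfl⟩))⟩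
        simp only [ne_eq, Fin.mk.injEq]; omega
      have hfmap : ∀ ⦃u v⦄, T.Adj u v →
          (graphJoin (⊥ : SimpleGraph (Fin k)) (twoEdgesGraph k)).Adj (f u) (f v) := by
        intro u v h
        by_cases hua : u = a
        · have hv : v = b := (hnb v).mp (hua ▸ h)
          rw [hua, hv, hf]; dsimp only
          rw [if_pos rfl, if_neg hba, if_pos rfl]
          exact hostrr _ _ he1
        · by_cases hub : u = b
          · have hvA : v ∈ A := hcrossBA (hub ▸ h) hbB
            by_cases hva : v = a
            · rw [hub, hva, hf]; dsimp only
              rw [if_pos rfl, if_neg hba, if_pos rfl]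
              exact hostrr _ _ he1.symm
            · have hvb : v ≠ b := fun e => hdisj hbB (e ▸ hvA)
              rw [hub, hf]; dsimp only
              rw [if_neg hba, if_pos rfl, if_neg hva, if_neg hvb, if_pos hvA]
              exact hostrl _ _
          · by_cases huA : u ∈ A
            · have hvB : v ∈ B := hcrossAB h huA
              have hva : v ≠ a := fun e => hdisj hvB (e ▸ haA)
              have hub' : u ≠ b := fun e => hdisj hbB (e ▸ huA)
              rw [hf]; dsimp only
              rw [if_neg hua, if_neg hub', if_pos huA]
              by_cases hvb : v = b
              · rw [if_neg hva, if_pos hvb]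
                exact hostlr _ _
              · rw [if_neg hva, if_neg hvb, if_neg (hdisj hvB)]
                exact hostlr _ _
            · have huB : u ∈ B := hnotA huA
              have hvA : v ∈ A := hcrossBA h huB
              have hvb : v ≠ b := fun e => hdisj hbB (e ▸ hvA)
              have hva : v ≠ a := fun e => hub ((hnb u).mp (e ▸ h).symm)
              rw [hf]; dsimp only
              rw [if_neg hua, if_neg hub, if_neg huA, if_neg hva, if_neg hvb, if_pos hvA]
              exact hostrl _ _
      have hfinj : Function.Injective f := by
        have hAval : ∀ w (hw : w ≠ a) (hw2 : w ≠ b) (hw3 : w ∈ A),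
            f w = Sum.inl ⟨gA w, hgAlt w⟩ := by
          intro w hw hw2 hw3
          rw [hf]; dsimp only; rw [if_neg hw, if_neg hw2, if_pos hw3]
        have hBval : ∀ w (hw : w ≠ a) (hw2 : w ≠ b) (hw3 : w ∉ A),
            f w = Sum.inr ⟨gB w, by have := hgBlt w; omega⟩ := by
          intro w hw hw2 hw3
          rw [hf]; dsimp only; rw [if_neg hw, if_neg hw2, if_neg hw3]
        have hfa : f a = Sum.inr ⟨2 * k, by omega⟩ := by
          rw [hf]; dsimp only; rw [if_pos rfl]
        have hfb : f b = Sum.inr ⟨2 * k + 1, by omega⟩ := by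
          rw [hf]; dsimp only; rw [if_neg hba, if_pos rfl]
        have key : ∀ w, w ≠ a → w ≠ b → f w ≠ f a ∧ f w ≠ f b := by
          intro w hw hw2
          by_cases hw3 : w ∈ A
          · rw [hAval w hw hw2 hw3, hfa, hfb]
            exact ⟨fun e => by simp at e, fun e => by simp at e⟩
          · rw [hBval w hw hw2 hw3, hfa, hfb]
            constructor
            · intro e
              simp only [Sum.inr.injEq, Fin.mk.injEq] at e
              have := hgBlt w; omega
            · intro e
              simp only [Sum.inr.injEq, Fin.mk.injEq] at e
              have := hgBlt w; omega
        have hfab : f a ≠ f b := by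
          rw [hfa, hfb]
          intro e; simp only [Sum.inr.injEq, Fin.mk.injEq] at e; omega
        intro u v h
        by_cases hua : u = a <;> by_cases hva : v = a
        · rw [hua, hva]
        · by_cases hvb : v = b
          · rw [hua, hvb] at h; exact absurd h hfab
          · rw [hua] at h; exact absurd h.symm (key v hva hvb).1
        · by_cases hub : u = b
          · rw [hva, hub] at h; exact absurd h (Ne.symm hfab)
          · rw [hva] at h; exact absurd h (key u hua hub).1
        · by_cases hub : u = b <;> by_cases hvb : v = b
          · rw [hub, hvb]
          · rw [hub] at h; exact absurd h.symm (key v hva hvb).2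
          · rw [hvb] at h; exact absurd h (key u hua hub).2
          · by_cases huA : u ∈ A <;> by_cases hvA : v ∈ A
            · rw [hAval u hua hub huA, hAval v hva hvb hvA] at h
              simp only [Sum.inl.injEq, Fin.mk.injEq] at h
              exact hgAinj u v (Finset.mem_erase.mpr ⟨hua, huA⟩)
                (Finset.mem_erase.mpr ⟨hva, hvA⟩) h
            · rw [hAval u hua hub huA, hBval v hva hvb hvA] at h; simp at h
            · rw [hBval u hua hub huA, hAval v hva hvb hvA] at h; simp at h
            · rw [hBval u hua hub huA, hBval v hva hvb hvA] at h
              simp only [Sum.inr.injEq, Fin.mk.injEq] at h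
              exact hgBinj u v (Finset.mem_erase.mpr ⟨hub, hnotA huA⟩)
                (Finset.mem_erase.mpr ⟨hvb, hnotA hvA⟩) h
      exact ⟨⟨f, fun {u v} h => hfmap h⟩, hfinj⟩
    · -- CASE 2 : all of A has degree >= 2
      have hA2 : ∀ x ∈ A, 2 ≤ T.degree x := by
        intro x hx
        have h1 := hdegpos x
        have h2 : ¬ T.degree x = 1 := fun e => hleafA ⟨x, hx, e⟩
        omega
      set Lv := univ.filter (fun v => T.degree v = 1) with hLvdef
      have hLv1 : ∀ l ∈ Lv, T.degree l = 1 := by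
        intro l hl; rw [hLvdef] at hl; simpa using hl
      have hLvB : ∀ l ∈ Lv, l ∈ B := by
        intro l hl
        by_contra hc2
        have hlA : l ∈ A := by
          by_contra hc3; exact hc2 (hnotA hc3)
        have := hA2 l hlA; have := hLv1 l hl; omega
      have hsplitsum : (∑ v ∈ Lv, T.degree v) +
          (∑ v ∈ univ.filter (fun v => ¬ T.degree v = 1), T.degree v) = 2 * (2 * k + 2) := by
        rw [hLvdef, ← hsumdeg]
        exact Finset.sum_filter_add_sum_filter_not univ _ _
      have hLvcard : Lv.card + (univ.filter (fun v => ¬ T.degree v = 1)).card = 2 * k + 3 := by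
        rw [hLvdef, ← hcard, ← Finset.card_univ]
        exact Finset.card_filter_add_card_filter_not (p := fun v => T.degree v = 1)
      have hsum1 : ∑ v ∈ Lv, T.degree v = Lv.card := by
        rw [Finset.sum_congr rfl hLv1]; simp
      have hsum2 : 2 * (univ.filter (fun v => ¬ T.degree v = 1)).card ≤
          ∑ v ∈ (univ.filter (fun v => ¬ T.degree v = 1)), T.degree v := by
        have hrest2 : ∀ v ∈ univ.filter (fun v => ¬ T.degree v = 1), 2 ≤ T.degree v := by
          intro v hv; rw [Finset.mem_filter] at hv; have := hdegpos v; omega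
        have := Finset.card_nsmul_le_sum _ _ 2 hrest2
        simpa [mul_comm] using this
      have hLvcard2 : 1 < Lv.card := by omega
      set nb : α → α := fun v => if h : T.degree v = 1 then (huniq v h).choose else v with hnbdef
      have hnbspec : ∀ l ∈ Lv, ∀ w, T.Adj l w ↔ w = nb l := by
        intro l hl w
        have h1 := hLv1 l hl
        rw [hnbdef]; dsimp only; rw [dif_pos h1]
        exact (huniq l h1).choose_spec w
      have hkey : ∃ x ∈ Lv, ∃ y ∈ Lv, x ≠ y ∧ nb x ≠ nb y := by
        by_contra hcon
        push_neg at hcon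
        obtain ⟨l1, hl1, l2, hl2, hll⟩ := Finset.one_lt_card.mp hLvcard2
        set a0 := nb l1 with ha0
        have hall : ∀ l ∈ Lv, T.Adj l a0 := by
          intro l hl
          have he : nb l = a0 := by
            by_cases h : l = l1
            · rw [h, ha0]
            · exact hcon l hl l1 hl1 h
          rw [← he]
          exact (hnbspec l hl (nb l)).mpr rfl
        have ha0A : a0 ∈ A := hcrossBA (hall l1 hl1) (hLvB l1 hl1)
        have ha0d : 2 ≤ T.degree a0 := hA2 a0 ha0A
        have ha0Lv : a0 ∉ Lv := fun h => by have := hLv1 a0 h; omega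
        have hsub : Lv ⊆ T.neighborFinset a0 := fun l hl =>
          (SimpleGraph.mem_neighborFinset _ _ _).mpr (hall l hl).symm
        have hd1 : T.degree a0 ≤ Lv.card := by
          have e2 : Lv ⊆ univ.erase a0 := fun l hl =>
            Finset.mem_erase.mpr ⟨fun e => ha0Lv (e ▸ hl), Finset.mem_univ l⟩
          have e1 : ∑ v ∈ univ.erase a0, T.degree v + T.degree a0 = ∑ v, T.degree v :=
            Finset.sum_erase_add univ _ (Finset.mem_univ a0)
          have e3 : ∑ v ∈ (univ.erase a0) \ Lv, T.degree v + ∑ v ∈ Lv, T.degree v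
              = ∑ v ∈ univ.erase a0, T.degree v := Finset.sum_sdiff e2
          have e4 : 2 * ((univ.erase a0) \ Lv).card ≤
              ∑ v ∈ (univ.erase a0) \ Lv, T.degree v := by
            have h5 : ∀ v ∈ (univ.erase a0) \ Lv, 2 ≤ T.degree v := by
              intro v hv
              rw [Finset.mem_sdiff] at hv
              have h6 : ¬ T.degree v = 1 := fun e => hv.2 (by rw [hLvdef]; simp [e])
              have := hdegpos v; omega
            have := Finset.card_nsmul_le_sum _ _ 2 h5
            simpa [mul_comm] using this
          have e5 : ((univ.erase a0) \ Lv).card = (univ.erase a0).card - Lv.card :=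
            Finset.card_sdiff_of_subset e2
          have e6 : (univ.erase a0).card = 2 * k + 2 := by
            rw [Finset.card_erase_of_mem (Finset.mem_univ a0), Finset.card_univ, hcard]
            omega
          have e7 : Lv.card ≤ (univ.erase a0).card := Finset.card_le_card e2
          omega
        have heq : Lv = T.neighborFinset a0 :=
          Finset.eq_of_subset_of_card_le hsub hd1
        have hclosed : ∀ u ∈ ((insert a0 Lv : Finset α) : Set α), ∀ v, T.Adj u v →
            v ∈ ((insert a0 Lv : Finset α) : Set α) := by
          intro u hu v hadj
          rw [Finset.mem_coe, Finset.mem_insert] at hu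
          rcases hu with hu | hu
          · rw [Finset.mem_coe, Finset.mem_insert]
            right
            rw [heq]
            exact (SimpleGraph.mem_neighborFinset _ _ _).mpr (hu ▸ hadj)
          · have hv := (hnbspec u hu v).mp hadj
            have he : nb u = a0 := by
              by_cases h : u = l1
              · rw [h, ha0]
              · exact hcon u hu l1 hl1 h
            rw [Finset.mem_coe, Finset.mem_insert]
            left; rw [hv, he]
        have hA1 : 1 < A.card := by omega
        obtain ⟨x, hx, y, hy, hxy⟩ := Finset.one_lt_card.mp hA1
        have hgetz : ∃ z ∈ A, z ≠ a0 := by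
          by_cases h : x = a0
          · exact ⟨y, hy, fun e => hxy (by rw [h, e])⟩
          · exact ⟨x, hx, h⟩
        obtain ⟨z, hzA, hza0⟩ := hgetz
        obtain ⟨p⟩ := hT.isConnected a0 z
        have hz : z ∈ (insert a0 Lv : Finset α) := by
          have := walk_closed' hclosed p (by
            rw [Finset.mem_coe, Finset.mem_insert]; left; rfl)
          rwa [Finset.mem_coe] at this
        rcases Finset.mem_insert.mp hz with h | h
        · exact hza0 h
        · exact hdisj (hLvB z h) hzA
      obtain ⟨m1, hm1, m2, hm2, hmm, hnbne⟩ := hkey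
      set a1 := nb m1 with ha1def
      set a2 := nb m2 with ha2def
      have hnb1 : ∀ w, T.Adj m1 w ↔ w = a1 := hnbspec m1 hm1
      have hnb2 : ∀ w, T.Adj m2 w ↔ w = a2 := hnbspec m2 hm2
      have hadj1 : T.Adj m1 a1 := (hnb1 a1).mpr rfl
      have hadj2 : T.Adj m2 a2 := (hnb2 a2).mpr rfl
      have hm1B : m1 ∈ B := hLvB m1 hm1
      have hm2B : m2 ∈ B := hLvB m2 hm2
      have ha1A : a1 ∈ A := hcrossBA hadj1 hm1B
      have ha2A : a2 ∈ A := hcrossBA hadj2 hm2B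
      have ha12 : a1 ≠ a2 := hnbne
      have ha21 : a2 ≠ a1 := ha12.symm
      have hm12 : m1 ≠ m2 := hmm
      have hm21 : m2 ≠ m1 := hm12.symm
      have ha1m1 : a1 ≠ m1 := fun e => hdisj hm1B (e ▸ ha1A)
      have ha1m2 : a1 ≠ m2 := fun e => hdisj hm2B (e ▸ ha1A)
      have ha2m1 : a2 ≠ m1 := fun e => hdisj hm1B (e ▸ ha2A)
      have ha2m2 : a2 ≠ m2 := fun e => hdisj hm2B (e ▸ ha2A)
      have ha2A1 : a2 ∈ A.erase a1 := Finset.mem_erase.mpr ⟨ha21, ha2A⟩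
      have hm2B1 : m2 ∈ B.erase m1 := Finset.mem_erase.mpr ⟨hm21, hm2B⟩
      obtain ⟨eA⟩ : Nonempty ({x // x ∈ (A.erase a1).erase a2} ↪ Fin (2 * k - 2)) := by
        apply Function.Embedding.nonempty_of_card_le
        rw [Fintype.card_coe, Fintype.card_fin, Finset.card_erase_of_mem ha2A1,
          Finset.card_erase_of_mem ha1A]
        omega
      obtain ⟨eB⟩ : Nonempty ({x // x ∈ (B.erase m1).erase m2} ↪ Fin k) := by
        apply Function.Embedding.nonempty_of_card_le
        rw [Fintype.card_coe, Fintype.card_fin, Finset.card_erase_of_mem hm2B1,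
          Finset.card_erase_of_mem hm1B]
        omega
      set gA : α → ℕ := fun v =>
        if h : v ∈ (A.erase a1).erase a2 then (eA ⟨v, h⟩).val else 0 with hgA
      set gB : α → ℕ := fun v =>
        if h : v ∈ (B.erase m1).erase m2 then (eB ⟨v, h⟩).val else 0 with hgB
      have hgAub : ∀ v, gA v < 2 * k + 2 := by
        intro v; rw [hgA]; dsimp only; split
        · have := Fin.is_lt (eA ⟨v, by assumption⟩); omega
        · omega
      have hgAmem : ∀ v, v ∈ (A.erase a1).erase a2 → gA v < 2 * k - 2 := by
        intro v hv; rw [hgA]; dsimp only; rw [dif_pos hv]; exact Fin.is_lt _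
      have hgBlt : ∀ v, gB v < k := by
        intro v; rw [hgB]; dsimp only; split
        · exact Fin.is_lt _
        · exact hk
      have hgAinj : ∀ u v, u ∈ (A.erase a1).erase a2 → v ∈ (A.erase a1).erase a2 →
          gA u = gA v → u = v := by
        intro u v hu hv h
        rw [hgA] at h; dsimp only at h; rw [dif_pos hu, dif_pos hv] at h
        exact congrArg Subtype.val (eA.injective (Fin.val_injective h))
      have hgBinj : ∀ u v, u ∈ (B.erase m1).erase m2 → v ∈ (B.erase m1).erase m2 →
          gB u = gB v → u = v := by
        intro u v hu hv h
        rw [hgB] at h; dsimp only at h; rw [dif_pos hu, dif_pos hv] at h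
        exact congrArg Subtype.val (eB.injective (Fin.val_injective h))
      set f : α → Fin k ⊕ Fin (2 * k + 2) := fun v =>
        if v = a1 then Sum.inr ⟨2 * k - 2, by omega⟩
        else if v = m1 then Sum.inr ⟨2 * k - 1, by omega⟩
        else if v = a2 then Sum.inr ⟨2 * k, by omega⟩
        else if v = m2 then Sum.inr ⟨2 * k + 1, by omega⟩
        else if v ∈ A then Sum.inr ⟨gA v, hgAub v⟩
        else Sum.inl ⟨gB v, hgBlt v⟩ with hf
      have he1 : (twoEdgesGraph k).Adj ⟨2 * k - 2, by omega⟩ ⟨2 * k - 1, by omega⟩ := by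
        show _ ≠ _ ∧ _
        refine ⟨?_, Or.inl ⟨rfl, rfl⟩⟩
        simp only [ne_eq, Fin.mk.injEq]; omega
      have he2 : (twoEdgesGraph k).Adj ⟨2 * k, by omega⟩ ⟨2 * k + 1, by omega⟩ := by
        show _ ≠ _ ∧ _
        refine ⟨?_, Or.inr (Or.inr (Or.inl ⟨rfl, rfl⟩))⟩
        simp only [ne_eq, Fin.mk.injEq]; omega
      -- evaluation lemmas
      have hfa1 : f a1 = Sum.inr ⟨2 * k - 2, by omega⟩ := by
        rw [hf]; dsimp only; rw [if_pos rfl]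
      have hfm1 : f m1 = Sum.inr ⟨2 * k - 1, by omega⟩ := by
        rw [hf]; dsimp only; rw [if_neg ha1m1.symm, if_pos rfl]
      have hfa2 : f a2 = Sum.inr ⟨2 * k, by omega⟩ := by
        rw [hf]; dsimp only; rw [if_neg ha21, if_neg ha2m1, if_pos rfl]
      have hfm2 : f m2 = Sum.inr ⟨2 * k + 1, by omega⟩ := by
        rw [hf]; dsimp only; rw [if_neg ha1m2.symm, if_neg hm21, if_neg ha2m2.symm, if_pos rfl]
      have hAval : ∀ w, w ≠ a1 → w ≠ m1 → w ≠ a2 → w ≠ m2 → w ∈ A →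
          f w = Sum.inr ⟨gA w, hgAub w⟩ := by
        intro w h1 h2 h3 h4 h5
        rw [hf]; dsimp only; rw [if_neg h1, if_neg h2, if_neg h3, if_neg h4, if_pos h5]
      have hBval : ∀ w, w ≠ a1 → w ≠ m1 → w ≠ a2 → w ≠ m2 → w ∉ A →
          f w = Sum.inl ⟨gB w, hgBlt w⟩ := by
        intro w h1 h2 h3 h4 h5
        rw [hf]; dsimp only; rw [if_neg h1, if_neg h2, if_neg h3, if_neg h4, if_neg h5]
      have hAinr : ∀ u ∈ A, ∃ y, f u = Sum.inr y := by
        intro u hu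
        by_cases h1 : u = a1
        · exact ⟨_, by rw [h1, hfa1]⟩
        · by_cases h3 : u = a2
          · exact ⟨_, by rw [h3, hfa2]⟩
          · have h2 : u ≠ m1 := fun e => hdisj hm1B (e ▸ hu)
            have h4 : u ≠ m2 := fun e => hdisj hm2B (e ▸ hu)
            exact ⟨_, hAval u h1 h2 h3 h4 hu⟩
      have hfmap : ∀ ⦃u v⦄, T.Adj u v →
          (graphJoin (⊥ : SimpleGraph (Fin k)) (twoEdgesGraph k)).Adj (f u) (f v) := by
        have hmain : ∀ u v, T.Adj u v → u ∈ A →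
            (graphJoin (⊥ : SimpleGraph (Fin k)) (twoEdgesGraph k)).Adj (f u) (f v) := by
          intro u v h hu
          have hvB : v ∈ B := hcrossAB h hu
          by_cases hv1 : v = m1
          · have hu1 : u = a1 := (hnb1 u).mp (hv1 ▸ h).symm
            rw [hu1, hv1, hfa1, hfm1]
            exact hostrr _ _ he1
          · by_cases hv2 : v = m2
            · have hu2 : u = a2 := (hnb2 u).mp (hv2 ▸ h).symm
              rw [hu2, hv2, hfa2, hfm2]
              exact hostrr _ _ he2
            · have hva1 : v ≠ a1 := fun e => hdisj hvB (e ▸ ha1A)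
              have hva2 : v ≠ a2 := fun e => hdisj hvB (e ▸ ha2A)
              obtain ⟨y, hy⟩ := hAinr u hu
              rw [hy, hBval v hva1 hv1 hva2 hv2 (hdisj hvB)]
              exact hostrl _ _
        intro u v h
        by_cases hu : u ∈ A
        · exact hmain u v h hu
        · have hv : v ∈ A := hcrossBA h (hnotA hu)
          exact (hmain v u h.symm hv).symm
      have hfinj : Function.Injective f := by
        have keyg : ∀ w, w ≠ a1 → w ≠ m1 → w ≠ a2 → w ≠ m2 →
            f w ≠ f a1 ∧ f w ≠ f m1 ∧ f w ≠ f a2 ∧ f w ≠ f m2 := by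
          intro w h1 h2 h3 h4
          by_cases h5 : w ∈ A
          · have hmem : w ∈ (A.erase a1).erase a2 :=
              Finset.mem_erase.mpr ⟨h3, Finset.mem_erase.mpr ⟨h1, h5⟩⟩
            have hlt := hgAmem w hmem
            rw [hAval w h1 h2 h3 h4 h5, hfa1, hfm1, hfa2, hfm2]
            refine ⟨?_, ?_, ?_, ?_⟩ <;>
              (intro e; simp only [Sum.inr.injEq, Fin.mk.injEq] at e; omega)
          · rw [hBval w h1 h2 h3 h4 h5, hfa1, hfm1, hfa2, hfm2]
            refine ⟨?_, ?_, ?_, ?_⟩ <;> (intro e; simp at e)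
        have hspec1 : ∀ w, f w = f a1 → w = a1 := by
          intro w hw
          by_cases h1 : w = a1
          · exact h1
          · exfalso
            by_cases h2 : w = m1
            · rw [h2, hfm1, hfa1] at hw
              simp only [Sum.inr.injEq, Fin.mk.injEq] at hw; omega
            · by_cases h3 : w = a2
              · rw [h3, hfa2, hfa1] at hw
                simp only [Sum.inr.injEq, Fin.mk.injEq] at hw; omega
              · by_cases h4 : w = m2
                · rw [h4, hfm2, hfa1] at hw
                  simp only [Sum.inr.injEq, Fin.mk.injEq] at hw; omega
                · exact (keyg w h1 h2 h3 h4).1 hw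
        have hspec2 : ∀ w, f w = f m1 → w = m1 := by
          intro w hw
          by_cases h2 : w = m1
          · exact h2
          · exfalso
            by_cases h1 : w = a1
            · rw [h1, hfa1, hfm1] at hw
              simp only [Sum.inr.injEq, Fin.mk.injEq] at hw; omega
            · by_cases h3 : w = a2
              · rw [h3, hfa2, hfm1] at hw
                simp only [Sum.inr.injEq, Fin.mk.injEq] at hw; omega
              · by_cases h4 : w = m2
                · rw [h4, hfm2, hfm1] at hw
                  simp only [Sum.inr.injEq, Fin.mk.injEq] at hw; omega
                · exact (keyg w h1 h2 h3 h4).2.1 hw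
        have hspec3 : ∀ w, f w = f a2 → w = a2 := by
          intro w hw
          by_cases h3 : w = a2
          · exact h3
          · exfalso
            by_cases h1 : w = a1
            · rw [h1, hfa1, hfa2] at hw
              simp only [Sum.inr.injEq, Fin.mk.injEq] at hw; omega
            · by_cases h2 : w = m1
              · rw [h2, hfm1, hfa2] at hw
                simp only [Sum.inr.injEq, Fin.mk.injEq] at hw; omega
              · by_cases h4 : w = m2
                · rw [h4, hfm2, hfa2] at hw
                  simp only [Sum.inr.injEq, Fin.mk.injEq] at hw; omega
                · exact (keyg w h1 h2 h3 h4).2.2.1 hw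
        have hspec4 : ∀ w, f w = f m2 → w = m2 := by
          intro w hw
          by_cases h4 : w = m2
          · exact h4
          · exfalso
            by_cases h1 : w = a1
            · rw [h1, hfa1, hfm2] at hw
              simp only [Sum.inr.injEq, Fin.mk.injEq] at hw; omega
            · by_cases h2 : w = m1
              · rw [h2, hfm1, hfm2] at hw
                simp only [Sum.inr.injEq, Fin.mk.injEq] at hw; omega
              · by_cases h3 : w = a2
                · rw [h3, hfa2, hfm2] at hw
                  simp only [Sum.inr.injEq, Fin.mk.injEq] at hw; omega
                · exact (keyg w h1 h2 h3 h4).2.2.2 hw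
        intro u v h
        by_cases hv1 : v = a1
        · rw [hv1] at h; rw [hspec1 u h, hv1]
        · by_cases hv2 : v = m1
          · rw [hv2] at h; rw [hspec2 u h, hv2]
          · by_cases hv3 : v = a2
            · rw [hv3] at h; rw [hspec3 u h, hv3]
            · by_cases hv4 : v = m2
              · rw [hv4] at h; rw [hspec4 u h, hv4]
              · by_cases hu1 : u = a1
                · rw [hu1] at h; exact absurd (hspec1 v h.symm) hv1
                · by_cases hu2 : u = m1
                  · rw [hu2] at h; exact absurd (hspec2 v h.symm) hv2
                  · by_cases hu3 : u = a2
                    · rw [hu3] at h; exact absurd (hspec3 v h.symm) hv3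
                    · by_cases hu4 : u = m2
                      · rw [hu4] at h; exact absurd (hspec4 v h.symm) hv4
                      · by_cases huA : u ∈ A <;> by_cases hvA : v ∈ A
                        · rw [hAval u hu1 hu2 hu3 hu4 huA,
                            hAval v hv1 hv2 hv3 hv4 hvA] at h
                          simp only [Sum.inr.injEq, Fin.mk.injEq] at h
                          exact hgAinj u v
                            (Finset.mem_erase.mpr ⟨hu3, Finset.mem_erase.mpr ⟨hu1, huA⟩⟩)
                            (Finset.mem_erase.mpr ⟨hv3, Finset.mem_erase.mpr ⟨hv1, hvA⟩⟩) h
                        · rw [hAval u hu1 hu2 hu3 hu4 huA,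
                            hBval v hv1 hv2 hv3 hv4 hvA] at h
                          simp at h
                        · rw [hBval u hu1 hu2 hu3 hu4 huA,
                            hAval v hv1 hv2 hv3 hv4 hvA] at h
                          simp at h
                        · rw [hBval u hu1 hu2 hu3 hu4 huA,
                            hBval v hv1 hv2 hv3 hv4 hvA] at h
                          simp only [Sum.inl.injEq, Fin.mk.injEq] at h
                          exact hgBinj u v
                            (Finset.mem_erase.mpr ⟨hu4, Finset.mem_erase.mpr ⟨hu2, hnotA huA⟩⟩)
                            (Finset.mem_erase.mpr ⟨hv4, Finset.mem_erase.mpr ⟨hv2, hnotA hvA⟩⟩) h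
      exact ⟨⟨f, fun {u v} h => hfmap h⟩, hfinj⟩
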